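/- Let V : ℝⁿ → ℝ̄ be measurable such that both V and x ↦ −V(−x) are a.e. equal to concave functions. Then either V(x) = ⟨a,x⟩ + b a.e. for some a, b, or V(x) = Φ⁻¹(1_{⟨a,x⟩+b ≥ 0}(x)) a.e. (i.e., V is a.e. equal to +∞ on a half-space and −∞ on its complement). -/

import Mathlib

open MeasureTheory
open scoped RealInnerProductSpace

/-- `EReal`-valued concavity. -/
def ConcaveE {n : ℕ} (W : EuclideanSpace ℝ (Fin n) → EReal) : Prop :=
  ∀ x y : EuclideanSpace ℝ (Fin n), ∀ α : ℝ, 0 ≤ α → α ≤ 1 →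
    ((α : ℝ) : EReal) * W x + ((1 - α : ℝ) : EReal) * W y ≤ W (α • x + (1 - α) • y)

lemma ereal_mul_ne_bot {a : ℝ} (ha : 0 < a) {X : EReal} (hX : X ≠ ⊥) :
    (a : EReal) * X ≠ ⊥ := by
  induction X using EReal.rec with
  | bot => exact absurd rfl hX
  | coe r => rw [← EReal.coe_mul]; exact EReal.coe_ne_bot _
  | top => rw [EReal.coe_mul_top_of_pos ha]; simp

lemma ray_eq_combo {n : ℕ} (x₀ y : EuclideanSpace ℝ (Fin n)) (t : ℝ) :
    y + t • (x₀ - y) = t • x₀ + (1 - t) • y := by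
  rw [smul_sub, sub_smul, one_smul]; abel

lemma mem_closure_of_ray {n : ℕ} {T : Set (EuclideanSpace ℝ (Fin n))}
    {x₀ y : EuclideanSpace ℝ (Fin n)}
    (h : ∀ t : ℝ, t ∈ Set.Ioc (0:ℝ) 1 → y + t • (x₀ - y) ∈ T) : y ∈ closure T := by
  have h1 : Filter.Tendsto (fun k : ℕ => 1/((k:ℝ)+1)) Filter.atTop (nhds 0) :=
    tendsto_one_div_add_atTop_nhds_zero_nat
  have h2 := (h1.smul_const (x₀ - y)).const_add y
  rw [zero_smul, add_zero] at h2
  refine mem_closure_of_tendsto h2 (Filter.Eventually.of_forall fun k => h _ ⟨by positivity, ?_⟩)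
  rw [div_le_one (by positivity)]
  have := Nat.cast_nonneg (α := ℝ) k
  linarith

lemma convexE_top {n : ℕ} {W : EuclideanSpace ℝ (Fin n) → EReal} (hW : ConcaveE W) :
    Convex ℝ {x | W x = ⊤} := by
  intro x hx y hy a b ha hb hab
  rcases eq_or_lt_of_le ha with h0 | h0
  · have : b = 1 := by linarith
    simpa [← h0, this] using hy
  rcases eq_or_lt_of_le hb with h1 | h1
  · have : a = 1 := by linarith
    simpa [← h1, this] using hx
  have hb' : b = 1 - a := by linarith
  have := hW x y a ha (by linarith)
  rw [Set.mem_setOf_eq.mp hx, Set.mem_setOf_eq.mp hy] at this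
  rw [EReal.coe_mul_top_of_pos h0, EReal.coe_mul_top_of_pos (by linarith : (0:ℝ) < 1 - a)] at this
  rw [EReal.top_add_top] at this
  have : W (a • x + (1-a) • y) = ⊤ := top_le_iff.mp this
  rw [Set.mem_setOf_eq, hb']
  exact this

lemma convexE_ne_bot {n : ℕ} {W : EuclideanSpace ℝ (Fin n) → EReal} (hW : ConcaveE W) :
    Convex ℝ {x | W x ≠ ⊥} := by
  intro x hx y hy a b ha hb hab
  rcases eq_or_lt_of_le ha with h0 | h0
  · have : b = 1 := by linarith
    simpa [← h0, this] using hy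
  rcases eq_or_lt_of_le hb with h1 | h1
  · have : a = 1 := by linarith
    simpa [← h1, this] using hx
  have hb' : b = 1 - a := by linarith
  have hle := hW x y a ha (by linarith)
  have hL : ((a : ℝ) : EReal) * W x + ((1 - a : ℝ) : EReal) * W y ≠ ⊥ := by
    rw [Ne, EReal.add_eq_bot_iff]
    push_neg
    exact ⟨ereal_mul_ne_bot h0 hx, ereal_mul_ne_bot (by linarith) hy⟩
  rw [Set.mem_setOf_eq, hb']
  intro hbot
  rw [hbot, le_bot_iff] at hle
  exact hL hle

lemma top_ray {n : ℕ} {W : EuclideanSpace ℝ (Fin n) → EReal} (hW : ConcaveE W)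
    {x₀ y : EuclideanSpace ℝ (Fin n)} (hx₀ : W x₀ = ⊤) (hy : W y ≠ ⊥) :
    ∀ t : ℝ, t ∈ Set.Ioc (0:ℝ) 1 → W (y + t • (x₀ - y)) = ⊤ := by
  intro t ⟨ht0, ht1⟩
  rw [ray_eq_combo]
  have hle := hW x₀ y t (le_of_lt ht0) ht1
  rw [hx₀, EReal.coe_mul_top_of_pos ht0] at hle
  rcases eq_or_lt_of_le ht1 with h1 | h1
  · rw [← h1] at hle ⊢
    simpa using hle
  · rw [EReal.top_add_of_ne_bot (ereal_mul_ne_bot (by linarith) hy)] at hle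
    exact top_le_iff.mp hle

lemma hyperplane_null {n : ℕ} (f : EuclideanSpace ℝ (Fin n) →L[ℝ] ℝ) (hf : f ≠ 0) (c : ℝ) :
    volume {x | f x = c} = 0 := by
  obtain ⟨z, hz⟩ : ∃ z, f z ≠ 0 := by
    by_contra h
    push_neg at h
    exact hf (ContinuousLinearMap.ext fun x => by simp [h x])
  set x₀ : EuclideanSpace ℝ (Fin n) := ((c) / f z) • z with hx₀
  have hfx₀ : f x₀ = c := by
    simp only [hx₀, _root_.map_smul, smul_eq_mul]
    field_simp
  set s : AffineSubspace ℝ (EuclideanSpace ℝ (Fin n)) :=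
    AffineSubspace.mk' x₀ (LinearMap.ker (f : EuclideanSpace ℝ (Fin n) →ₗ[ℝ] ℝ)) with hs
  have hset : {x | f x = c} = (s : Set (EuclideanSpace ℝ (Fin n))) := by
    ext x
    simp only [Set.mem_setOf_eq, SetLike.mem_coe, hs, AffineSubspace.mem_mk',
      LinearMap.mem_ker, vsub_eq_sub, ContinuousLinearMap.coe_coe, map_sub, hfx₀]
    constructor
    · intro h; rw [h]; ring
    · intro h; linarith
  rw [hset]
  refine Measure.addHaar_affineSubspace _ s ?_
  intro htop
  have : LinearMap.ker (f : EuclideanSpace ℝ (Fin n) →ₗ[ℝ] ℝ) = ⊤ := by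
    rw [← AffineSubspace.direction_mk' x₀ (LinearMap.ker (f : EuclideanSpace ℝ (Fin n) →ₗ[ℝ] ℝ)),
      ← hs, htop, AffineSubspace.direction_top]
  have := LinearMap.ker_eq_top.mp this
  apply hz
  have : (f : EuclideanSpace ℝ (Fin n) →ₗ[ℝ] ℝ) z = 0 := by rw [this]; rfl
  simpa using this

lemma open_convex_conull_eq_univ {n : ℕ} {O : Set (EuclideanSpace ℝ (Fin n))}
    (hO : IsOpen O) (hc : Convex ℝ O) (hμ : volume Oᶜ = 0) : O = Set.univ := by
  have huniv : volume (Set.univ : Set (EuclideanSpace ℝ (Fin n))) ≠ 0 :=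
    (isOpen_univ.measure_pos volume ⟨0, trivial⟩).ne'
  have hOne : O.Nonempty := by
    rcases Set.eq_empty_or_nonempty O with h | h
    · exfalso; apply huniv; rw [← Set.compl_empty, ← h]; exact hμ
    · exact h
  by_contra hne
  obtain ⟨x, hx⟩ : ∃ x, x ∉ O := by
    by_contra h
    push_neg at h
    exact hne (Set.eq_univ_of_forall h)
  obtain ⟨f, hf⟩ := geometric_hahn_banach_open_point hc hO hx
  obtain ⟨a₀, ha₀⟩ := hOne
  have hfne : f ≠ 0 := by
    intro h
    have := hf a₀ ha₀
    rw [h] at this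
    simp at this
  obtain ⟨z, hz⟩ : ∃ z, f z ≠ 0 := by
    by_contra h
    push_neg at h
    exact hfne (ContinuousLinearMap.ext fun x => by simp [h x])
  set U : Set (EuclideanSpace ℝ (Fin n)) := {y | f x < f y} with hU
  have hUopen : IsOpen U := isOpen_lt continuous_const f.continuous
  have hUne : U.Nonempty := by
    refine ⟨x + (1 / f z) • z, ?_⟩
    simp only [hU, Set.mem_setOf_eq, map_add, _root_.map_smul, smul_eq_mul]
    have : 1 / f z * f z = 1 := by field_simp
    rw [this]
    linarith
  have hsub : U ⊆ Oᶜ := by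
    intro y hy hyO
    exact absurd (hf y hyO) (not_lt.mpr (le_of_lt hy))
  exact absurd (measure_mono_null hsub hμ) (hUopen.measure_pos volume hUne).ne'

lemma convex_conull_eq_univ {n : ℕ} {S : Set (EuclideanSpace ℝ (Fin n))}
    (hc : Convex ℝ S) (hμ : volume Sᶜ = 0) : S = Set.univ := by
  have hint : volume (interior S)ᶜ = 0 := by
    have h1 : (interior S)ᶜ = closure Sᶜ := by
      rw [closure_compl]
    have h2 : closure Sᶜ ⊆ Sᶜ ∪ frontier Sᶜ := by
      rw [closure_eq_interior_union_frontier]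
      exact Set.union_subset_union_left _ interior_subset
    rw [h1]
    refine measure_mono_null h2 ?_
    refine le_antisymm (le_trans (measure_union_le _ _) ?_) zero_le
    rw [hμ, frontier_compl, hc.addHaar_frontier volume, add_zero]
  have := open_convex_conull_eq_univ isOpen_interior hc.interior hint
  exact Set.eq_univ_of_forall fun x => interior_subset (this ▸ Set.mem_univ x)

lemma interior_nonempty_of_measure_ne_zero {n : ℕ} {C : Set (EuclideanSpace ℝ (Fin n))}
    (hc : Convex ℝ C) (hμ : volume C ≠ 0) : (interior C).Nonempty := by
  by_contra h
  rw [Set.not_nonempty_iff_eq_empty] at h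
  apply hμ
  have hsub : C ⊆ frontier C := by
    intro x hx
    have : x ∈ closure C := subset_closure hx
    rw [closure_eq_interior_union_frontier, h] at this
    simpa using this
  exact measure_mono_null hsub (hc.addHaar_frontier volume)

lemma subset_closure_interior_of_convex {n : ℕ} {C : Set (EuclideanSpace ℝ (Fin n))}
    (hc : Convex ℝ C) (hne : (interior C).Nonempty) : C ⊆ closure (interior C) := by
  obtain ⟨y₀, hy₀⟩ := hne
  intro x hx
  have key : ∀ t : ℝ, t ∈ Set.Ioc (0:ℝ) 1 → x + t • (y₀ - x) ∈ interior C := fun t ht =>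
    hc.add_smul_sub_mem_interior hx hy₀ ht
  have h1 : Filter.Tendsto (fun k : ℕ => 1/((k:ℝ)+1)) Filter.atTop (nhds 0) :=
    tendsto_one_div_add_atTop_nhds_zero_nat
  have h2 := (h1.smul_const (y₀ - x)).const_add x
  rw [zero_smul, add_zero] at h2
  refine mem_closure_of_tendsto h2 (Filter.Eventually.of_forall fun k => key _ ⟨by positivity, ?_⟩)
  rw [div_le_one (by positivity)]
  have := Nat.cast_nonneg (α := ℝ) k
  linarith

lemma affine_of_convex_concave {n : ℕ} (w : EuclideanSpace ℝ (Fin n) → ℝ)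
    (hconc : ConcaveOn ℝ Set.univ w) (hconv : ConvexOn ℝ Set.univ w) :
    ∃ (a : EuclideanSpace ℝ (Fin n)) (b : ℝ), ∀ x, w x = ⟪a, x⟫ + b := by
  have heq : ∀ (x y : EuclideanSpace ℝ (Fin n)) (s t : ℝ), 0 ≤ s → 0 ≤ t → s + t = 1 →
      w (s • x + t • y) = s * w x + t * w y := by
    intro x y s t hs ht hst
    refine le_antisymm ?_ ?_
    · have := hconv.2 (Set.mem_univ x) (Set.mem_univ y) hs ht hst
      simpa [smul_eq_mul] using this
    · have := hconc.2 (Set.mem_univ x) (Set.mem_univ y) hs ht hst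
      simpa [smul_eq_mul] using this
  have hsm : ∀ (c : ℝ), 0 ≤ c → c ≤ 1 → ∀ x, w (c • x) = c * w x + (1 - c) * w 0 := by
    intro c h0 h1 x
    have := heq x 0 c (1 - c) h0 (by linarith) (by ring)
    rwa [smul_zero, add_zero] at this
  have hadd : ∀ x y, w (x + y) = w x + w y - w 0 := by
    intro x y
    have h1 : w ((1/2 : ℝ) • (x + y)) = (1/2) * w (x + y) + (1/2) * w 0 := by
      have := hsm (1/2) (by norm_num) (by norm_num) (x + y)
      rw [this]; ring
    have h2 : w ((1/2 : ℝ) • (x + y)) = (1/2) * w x + (1/2) * w y := by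
      rw [smul_add]
      exact heq x y (1/2) (1/2) (by norm_num) (by norm_num) (by norm_num)
    rw [h1] at h2
    linarith
  have hneg : ∀ x, w (-x) = 2 * w 0 - w x := by
    intro x
    have := hadd x (-x)
    rw [add_neg_cancel] at this
    linarith
  have hfull : ∀ (c : ℝ) (x), w (c • x) = c * w x + (1 - c) * w 0 := by
    have hnn : ∀ (c : ℝ), 0 ≤ c → ∀ x, w (c • x) = c * w x + (1 - c) * w 0 := by
      intro c h0 x
      rcases le_or_gt c 1 with h1 | h1
      · exact hsm c h0 h1 x
      · have hc0 : (0:ℝ) < c := by linarith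
        have := hsm (1/c) (by positivity) (by rw [div_le_one hc0]; linarith) (c • x)
        rw [smul_smul, one_div_mul_cancel hc0.ne', one_smul] at this
        field_simp at this ⊢
        linarith
    intro c x
    rcases le_or_gt 0 c with h0 | h0
    · exact hnn c h0 x
    · have h1 := hnn (-c) (by linarith) (-x)
      rw [neg_smul, smul_neg, neg_neg] at h1
      rw [h1, hneg x]
      ring
  have hlin : IsLinearMap ℝ (fun x => w x - w 0) := by
    constructor
    · intro x y
      rw [hadd x y]; ring
    · intro c x
      rw [smul_eq_mul, hfull c x]; ring
  set l' : EuclideanSpace ℝ (Fin n) →ₗ[ℝ] ℝ := IsLinearMap.mk' _ hlin with hl'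
  refine ⟨(InnerProductSpace.toDual ℝ _).symm (LinearMap.toContinuousLinearMap l'), w 0,
    fun x => ?_⟩
  have : ⟪(InnerProductSpace.toDual ℝ _).symm (LinearMap.toContinuousLinearMap l'), x⟫
      = w x - w 0 := by
    rw [InnerProductSpace.toDual_symm_apply]
    simp [hl']
  rw [this]
  ring

lemma concaveOn_toReal {n : ℕ} {W : EuclideanSpace ℝ (Fin n) → EReal} (hW : ConcaveE W)
    (hfin : ∀ x, W x ≠ ⊥ ∧ W x ≠ ⊤) :
    ConcaveOn ℝ Set.univ (fun x => (W x).toReal) := by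
  refine ⟨convex_univ, ?_⟩
  intro x _ y _ s t hs ht hst
  have ht' : t = 1 - s := by linarith
  subst ht'
  have hx' : W x = ((W x).toReal : EReal) := (EReal.coe_toReal (hfin x).2 (hfin x).1).symm
  have hy' : W y = ((W y).toReal : EReal) := (EReal.coe_toReal (hfin y).2 (hfin y).1).symm
  have hp' : W (s • x + (1 - s) • y) = ((W (s • x + (1 - s) • y)).toReal : EReal) :=
    (EReal.coe_toReal (hfin _).2 (hfin _).1).symm
  have h2 := hW x y s hs (by linarith)
  rw [hx', hy', hp', ← EReal.coe_mul, ← EReal.coe_mul, ← EReal.coe_add,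
    EReal.coe_le_coe_iff] at h2
  dsimp only
  rw [smul_eq_mul, smul_eq_mul]
  exact h2

lemma convexOn_negToRealNeg {n : ℕ} {G : EuclideanSpace ℝ (Fin n) → EReal} (hG : ConcaveE G)
    (hfin : ∀ x, G x ≠ ⊥ ∧ G x ≠ ⊤) :
    ConvexOn ℝ Set.univ (fun x => -((G (-x)).toReal)) := by
  have h := concaveOn_toReal hG hfin
  have h2 : ConcaveOn ℝ Set.univ (fun x : EuclideanSpace ℝ (Fin n) => (G (-x)).toReal) := by
    refine ⟨convex_univ, ?_⟩
    intro x _ y _ s t hs ht hst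
    have := h.2 (Set.mem_univ (-x)) (Set.mem_univ (-y)) hs ht hst
    dsimp only at this ⊢
    rw [show s • (-x) + t • (-y) = -(s • x + t • y) by rw [smul_neg, smul_neg, neg_add]] at this
    exact this
  exact h2.neg

lemma top_empty_of_finite {n : ℕ} {W : EuclideanSpace ℝ (Fin n) → EReal} (hWc : ConcaveE W)
    (hμ : volume {x | W x ≠ ⊥ ∧ W x ≠ ⊤} ≠ 0) : {x | W x = ⊤} = ∅ := by
  by_contra h
  obtain ⟨x₀, hx₀⟩ := Set.nonempty_iff_ne_empty.mpr h
  apply hμ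
  have hsub : {x | W x ≠ ⊥ ∧ W x ≠ ⊤} ⊆ frontier {x | W x = ⊤} := by
    rintro y ⟨hyb, hyt⟩
    have hcl : y ∈ closure {x | W x = ⊤} :=
      mem_closure_of_ray (fun t ht => top_ray hWc hx₀ hyb t ht)
    have hint : y ∉ interior {x | W x = ⊤} := by
      intro hy
      have : y ∈ {x | W x = ⊤} := interior_subset hy
      exact hyt this
    exact ⟨hcl, hint⟩
  exact measure_mono_null hsub ((convexE_top hWc).addHaar_frontier volume)
theorem stmt_18 (n : ℕ) (V : EuclideanSpace ℝ (Fin n) → EReal) (hV : Measurable V)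
    (h1 : ∃ W : EuclideanSpace ℝ (Fin n) → EReal, ConcaveE W ∧
      V =ᵐ[(volume : Measure (EuclideanSpace ℝ (Fin n)))] W)
    (h2 : ∃ W : EuclideanSpace ℝ (Fin n) → EReal, ConcaveE W ∧
      (fun x => -V (-x)) =ᵐ[(volume : Measure (EuclideanSpace ℝ (Fin n)))] W) :
    (∃ (a : EuclideanSpace ℝ (Fin n)) (b : ℝ),
      ∀ᵐ x ∂(volume : Measure (EuclideanSpace ℝ (Fin n))),
        V x = ((⟪a, x⟫ + b : ℝ) : EReal)) ∨
    (∃ (a : EuclideanSpace ℝ (Fin n)) (b : ℝ),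
      ∀ᵐ x ∂(volume : Measure (EuclideanSpace ℝ (Fin n))),
        V x = if 0 ≤ ⟪a, x⟫ + b then (⊤ : EReal) else ⊥) := by
  obtain ⟨W, hWc, hVW⟩ := h1
  obtain ⟨G, hGc, hVG⟩ := h2
  have hnegmp : MeasurePreserving (Neg.neg : EuclideanSpace ℝ (Fin n) → EuclideanSpace ℝ (Fin n))
      volume volume := Measure.measurePreserving_neg volume
  -- transfer h2 through the reflection
  have hVG' : ∀ᵐ x ∂(volume : Measure (EuclideanSpace ℝ (Fin n))), V x = -G (-x) := by
    have h := hnegmp.quasiMeasurePreserving.ae hVG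
    filter_upwards [h] with x hx
    simp only [neg_neg] at hx
    rw [← hx, neg_neg]
  have hVWn : ∀ᵐ x ∂(volume : Measure (EuclideanSpace ℝ (Fin n))), V (-x) = W (-x) :=
    hnegmp.quasiMeasurePreserving.ae hVW
  set F : Set (EuclideanSpace ℝ (Fin n)) := {x | V x ≠ ⊥ ∧ V x ≠ ⊤} with hFdef
  by_cases hF : volume F = 0
  · -- CASE 2 : V is a.e. infinite
    have htb : ∀ᵐ x ∂(volume : Measure (EuclideanSpace ℝ (Fin n))), V x = ⊤ ∨ V x = ⊥ := by
      rw [ae_iff]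
      convert hF using 2
      ext x
      simp only [hFdef, Set.mem_setOf_eq]
      push_neg
      tauto
    right
    by_cases hA : volume {x : EuclideanSpace ℝ (Fin n) | V x = ⊤} = 0
    · refine ⟨0, -1, ?_⟩
      have hA' : ∀ᵐ x ∂(volume : Measure (EuclideanSpace ℝ (Fin n))), V x ≠ ⊤ := by
        rw [ae_iff]
        simpa [not_not] using hA
      filter_upwards [htb, hA'] with x hx hx'
      rcases hx with h | h
      · exact absurd h hx'
      · rw [h, if_neg]
        rw [inner_zero_left]
        norm_num
    by_cases hB : volume {x : EuclideanSpace ℝ (Fin n) | V x = ⊥} = 0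
    · refine ⟨0, 0, ?_⟩
      have hB' : ∀ᵐ x ∂(volume : Measure (EuclideanSpace ℝ (Fin n))), V x ≠ ⊥ := by
        rw [ae_iff]
        simpa [not_not] using hB
      filter_upwards [htb, hB'] with x hx hx'
      rcases hx with h | h
      · rw [h, if_pos]
        rw [inner_zero_left]
        norm_num
      · exact absurd h hx'
    -- both halves have positive measure
    set C₁ : Set (EuclideanSpace ℝ (Fin n)) := {x | W x = ⊤} with hC₁def
    set C₂ : Set (EuclideanSpace ℝ (Fin n)) := {x | G (-x) = ⊤} with hC₂def
    have hC₁conv : Convex ℝ C₁ := convexE_top hWc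
    have hC₂conv : Convex ℝ C₂ := by
      intro x hx y hy a b ha hb hab
      have h := (convexE_top hGc) (show -x ∈ {z | G z = ⊤} from hx)
        (show -y ∈ {z | G z = ⊤} from hy) ha hb hab
      have : a • (-x) + b • (-y) = -(a • x + b • y) := by
        rw [smul_neg, smul_neg, neg_add]
      rw [this] at h
      exact h
    have hmC₁ : volume C₁ ≠ 0 := by
      have : {x : EuclideanSpace ℝ (Fin n) | V x = ⊤} =ᵐ[volume] C₁ := by
        rw [Filter.eventuallyEq_set]
        filter_upwards [hVW] with x hx
        simp only [hC₁def, Set.mem_setOf_eq, hx]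
      rw [← measure_congr this]
      exact hA
    have hmC₂ : volume C₂ ≠ 0 := by
      have : {x : EuclideanSpace ℝ (Fin n) | V x = ⊥} =ᵐ[volume] C₂ := by
        rw [Filter.eventuallyEq_set]
        filter_upwards [hVG'] with x hx
        simp only [hC₂def, Set.mem_setOf_eq, hx, EReal.neg_eq_bot_iff]
      rw [← measure_congr this]
      exact hB
    have hC₁C₂ : volume (C₁ ∩ C₂) = 0 := by
      have hsub : C₁ ∩ C₂ ⊆ {x | ¬ (V x = W x)} ∪ {x | ¬ (V x = -G (-x))} := by
        rintro x ⟨hx1, hx2⟩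
        rw [hC₁def, Set.mem_setOf_eq] at hx1
        rw [hC₂def, Set.mem_setOf_eq] at hx2
        by_cases hvw : V x = W x
        · refine Or.inr fun hvg => ?_
          rw [hx1] at hvw
          rw [hx2] at hvg
          rw [hvw] at hvg
          simp at hvg
        · exact Or.inl hvw
      refine measure_mono_null hsub ?_
      refine le_antisymm (le_trans (measure_union_le _ _) ?_) zero_le
      rw [ae_iff.mp hVW, ae_iff.mp hVG', add_zero]
    have hi₁ : (interior C₁).Nonempty := interior_nonempty_of_measure_ne_zero hC₁conv hmC₁
    have hi₂ : (interior C₂).Nonempty := interior_nonempty_of_measure_ne_zero hC₂conv hmC₂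
    have hdisj : Disjoint (interior C₁) (interior C₂) := by
      rw [Set.disjoint_iff_inter_eq_empty]
      by_contra h
      obtain ⟨z, hz⟩ := Set.nonempty_iff_ne_empty.mpr h
      have hopen : IsOpen (interior C₁ ∩ interior C₂) := isOpen_interior.inter isOpen_interior
      have hpos := hopen.measure_pos volume ⟨z, hz⟩
      have : interior C₁ ∩ interior C₂ ⊆ C₁ ∩ C₂ :=
        Set.inter_subset_inter interior_subset interior_subset
      exact absurd (measure_mono_null this hC₁C₂) hpos.ne'
    obtain ⟨f, u, hfu₁, hfu₂⟩ := geometric_hahn_banach_open_open (hC₁conv.interior)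
      isOpen_interior (hC₂conv.interior) isOpen_interior hdisj
    obtain ⟨p₁, hp₁⟩ := id hi₁
    obtain ⟨p₂, hp₂⟩ := id hi₂
    have hfne : f ≠ 0 := by
      intro h
      have h1 := hfu₁ p₁ hp₁
      have h2 := hfu₂ p₂ hp₂
      rw [h] at h1 h2
      simp at h1 h2
      linarith
    have hC₁sub : C₁ ⊆ {x | f x ≤ u} := by
      refine (subset_closure_interior_of_convex hC₁conv hi₁).trans ?_
      refine closure_minimal (fun z hz => le_of_lt (hfu₁ z hz)) ?_
      exact isClosed_le f.continuous continuous_const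
    have hC₂sub : C₂ ⊆ {x | u ≤ f x} := by
      refine (subset_closure_interior_of_convex hC₂conv hi₂).trans ?_
      refine closure_minimal (fun z hz => le_of_lt (hfu₂ z hz)) ?_
      exact isClosed_le continuous_const f.continuous
    have hfu_null : ∀ᵐ x ∂(volume : Measure (EuclideanSpace ℝ (Fin n))), f x ≠ u := by
      rw [ae_iff]
      simpa [not_not] using hyperplane_null f hfne u
    set a : EuclideanSpace ℝ (Fin n) := (InnerProductSpace.toDual ℝ _).symm (-f) with hadef
    have hax : ∀ x, ⟪a, x⟫ = -f x := by
      intro x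
      rw [hadef, InnerProductSpace.toDual_symm_apply]
      simp
    refine ⟨a, u, ?_⟩
    filter_upwards [htb, hVW, hVG', hfu_null] with x hx h1 h2 h3
    rw [hax x]
    rcases hx with ht | hb
    · have hxC₁ : x ∈ C₁ := by
        rw [hC₁def, Set.mem_setOf_eq, ← h1]
        exact ht
      have := hC₁sub hxC₁
      rw [Set.mem_setOf_eq] at this
      have hlt : f x < u := lt_of_le_of_ne this h3
      rw [if_pos (by linarith)]
      exact ht
    · have hxC₂ : x ∈ C₂ := by
        rw [hC₂def, Set.mem_setOf_eq, ← EReal.neg_eq_bot_iff, ← h2]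
        exact hb
      have := hC₂sub hxC₂
      rw [Set.mem_setOf_eq] at this
      have hlt : u < f x := lt_of_le_of_ne this (Ne.symm h3)
      rw [if_neg (by linarith)]
      exact hb
  · -- CASE 1 : V is finite on a set of positive measure, hence a.e. affine
    left
    have hbadW : volume {x : EuclideanSpace ℝ (Fin n) | ¬ (V x = W x)} = 0 := ae_iff.mp hVW
    have hbadG : volume {x : EuclideanSpace ℝ (Fin n) | ¬ (-V (-x) = G x)} = 0 := ae_iff.mp hVG
    -- the finiteness set of W has positive measure
    have hFwW : volume {x : EuclideanSpace ℝ (Fin n) | W x ≠ ⊥ ∧ W x ≠ ⊤} ≠ 0 := by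
      intro h0
      apply hF
      have hsub : F ⊆ {x | W x ≠ ⊥ ∧ W x ≠ ⊤} ∪ {x | ¬ (V x = W x)} := by
        intro x hx
        by_cases h : V x = W x
        · left; rw [Set.mem_setOf_eq, ← h]; exact hx
        · right; exact h
      refine le_antisymm (le_trans (measure_mono hsub) ?_) zero_le
      refine le_trans (measure_union_le _ _) ?_
      rw [h0, hbadW, add_zero]
    -- the finiteness set of G has positive measure
    have hFmeas : MeasurableSet F := by
      have h1 : MeasurableSet {x : EuclideanSpace ℝ (Fin n) | V x = ⊥} :=
        hV (measurableSet_singleton ⊥)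
      have h2 : MeasurableSet {x : EuclideanSpace ℝ (Fin n) | V x = ⊤} :=
        hV (measurableSet_singleton ⊤)
      have : F = {x : EuclideanSpace ℝ (Fin n) | V x = ⊥}ᶜ ∩
          {x : EuclideanSpace ℝ (Fin n) | V x = ⊤}ᶜ := by
        ext x; simp [hFdef]
      rw [this]
      exact (h1.compl).inter (h2.compl)
    have hFwG : volume {x : EuclideanSpace ℝ (Fin n) | G x ≠ ⊥ ∧ G x ≠ ⊤} ≠ 0 := by
      intro h0
      apply hF
      have hμF' : volume (Neg.neg ⁻¹' F : Set (EuclideanSpace ℝ (Fin n))) = volume F :=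
        hnegmp.measure_preimage hFmeas.nullMeasurableSet
      have hsub : (Neg.neg ⁻¹' F : Set (EuclideanSpace ℝ (Fin n))) ⊆
          {x | G x ≠ ⊥ ∧ G x ≠ ⊤} ∪ {x | ¬ (-V (-x) = G x)} := by
        intro x hx
        by_cases h : -V (-x) = G x
        · left
          obtain ⟨hb, ht⟩ := hx
          rw [Set.mem_setOf_eq, ← h]
          constructor
          · rw [Ne, EReal.neg_eq_bot_iff]; exact ht
          · rw [Ne, EReal.neg_eq_top_iff]; exact hb
        · right; exact h
      rw [← hμF']
      refine le_antisymm (le_trans (measure_mono hsub) ?_) zero_le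
      refine le_trans (measure_union_le _ _) ?_
      rw [h0, hbadG, add_zero]
    -- no ⊤ values
    have htopW : {x : EuclideanSpace ℝ (Fin n) | W x = ⊤} = ∅ :=
      top_empty_of_finite hWc hFwW
    have htopG : {x : EuclideanSpace ℝ (Fin n) | G x = ⊤} = ∅ :=
      top_empty_of_finite hGc hFwG
    have hWnetop : ∀ x, W x ≠ ⊤ := by
      intro x hx
      exact absurd hx (Set.eq_empty_iff_forall_notMem.mp htopW x)
    have hGnetop : ∀ x, G x ≠ ⊤ := by
      intro x hx
      exact absurd hx (Set.eq_empty_iff_forall_notMem.mp htopG x)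
    -- no ⊥ values
    have hWnb : ∀ x, W x ≠ ⊥ := by
      have hae : ∀ᵐ x ∂(volume : Measure (EuclideanSpace ℝ (Fin n))), W x ≠ ⊥ := by
        filter_upwards [hVW, hVG'] with x h1 h2
        rw [← h1, h2, Ne, EReal.neg_eq_bot_iff]
        exact hGnetop _
      have hS : {x : EuclideanSpace ℝ (Fin n) | W x ≠ ⊥} = Set.univ := by
        refine convex_conull_eq_univ (convexE_ne_bot hWc) ?_
        have : {x : EuclideanSpace ℝ (Fin n) | W x ≠ ⊥}ᶜ
            = {x : EuclideanSpace ℝ (Fin n) | ¬ (W x ≠ ⊥)} := rfl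
        rw [this, ← ae_iff.mp hae]
      intro x
      exact Set.eq_univ_iff_forall.mp hS x
    have hGnb : ∀ x, G x ≠ ⊥ := by
      have hae : ∀ᵐ x ∂(volume : Measure (EuclideanSpace ℝ (Fin n))), G x ≠ ⊥ := by
        filter_upwards [hVG, hVWn] with x h1 h2
        rw [← h1, h2, Ne, EReal.neg_eq_bot_iff]
        exact hWnetop _
      have hS : {x : EuclideanSpace ℝ (Fin n) | G x ≠ ⊥} = Set.univ := by
        refine convex_conull_eq_univ (convexE_ne_bot hGc) ?_
        have : {x : EuclideanSpace ℝ (Fin n) | G x ≠ ⊥}ᶜ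
            = {x : EuclideanSpace ℝ (Fin n) | ¬ (G x ≠ ⊥)} := rfl
        rw [this, ← ae_iff.mp hae]
      intro x
      exact Set.eq_univ_iff_forall.mp hS x
    have hWfin : ∀ x, W x ≠ ⊥ ∧ W x ≠ ⊤ := fun x => ⟨hWnb x, hWnetop x⟩
    have hGfin : ∀ x, G x ≠ ⊥ ∧ G x ≠ ⊤ := fun x => ⟨hGnb x, hGnetop x⟩
    -- the real-valued functions
    set w : EuclideanSpace ℝ (Fin n) → ℝ := fun x => (W x).toReal with hwdef
    set uu : EuclideanSpace ℝ (Fin n) → ℝ := fun x => -((G (-x)).toReal) with huudef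
    have hwconc : ConcaveOn ℝ Set.univ w := concaveOn_toReal hWc hWfin
    have huuconv : ConvexOn ℝ Set.univ uu := convexOn_negToRealNeg hGc hGfin
    have hwcont : Continuous w := by
      rw [← continuousOn_univ]
      exact hwconc.continuousOn isOpen_univ
    have huucont : Continuous uu := by
      rw [← continuousOn_univ]
      exact huuconv.continuousOn isOpen_univ
    have hwu : w =ᵐ[(volume : Measure (EuclideanSpace ℝ (Fin n)))] uu := by
      filter_upwards [hVW, hVG'] with x h1 h2
      simp only [hwdef, huudef]
      rw [← h1, h2, EReal.toReal_neg_eq]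
    have hweq : w = uu := (hwcont.ae_eq_iff_eq volume huucont).mp hwu
    have hwconv : ConvexOn ℝ Set.univ w := hweq ▸ huuconv
    obtain ⟨a, b, hab⟩ := affine_of_convex_concave w hwconc hwconv
    refine ⟨a, b, ?_⟩
    filter_upwards [hVW] with x h1
    rw [h1, ← EReal.coe_toReal (hWfin x).2 (hWfin x).1]
    rw [show (W x).toReal = w x from rfl, hab x]
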